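/- (Markov) For every Boolean function f : {0,1}^n → {0,1}, the inversion complexity of f in circuits satisfies I(f) = ⌈log₂(d(f)+1)⌉; that is, the minimum number of NOT gates over all Boolean circuits computing f equals ⌈log₂(d(f)+1)⌉. -/

import Mathlib

namespace InversionComplexity

open Classical

/-- A chain is a strictly increasing sequence of Boolean vectors in `{0,1}^n`
(pointwise order on `Fin n → Bool`). -/
def IsChain {n : ℕ} (X : List (Fin n → Bool)) : Prop :=
  X.Chain' (· < ·)

/-- The decrease `d_X(f)` of `f` on a sequence `X`: the number of consecutive
indices `i` with `f (x^i) = 1` and `f (x^{i+1}) = 0`. -/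
def decOn {n : ℕ} (f : (Fin n → Bool) → Bool) : List (Fin n → Bool) → ℕ
  | a :: b :: t => (if f a = true ∧ f b = false then 1 else 0) + decOn f (b :: t)
  | _ => 0

/-- The decrease `d(f)` of `f`: the maximum of `d_X(f)` over all chains `X`. -/
noncomputable def dec {n : ℕ} (f : (Fin n → Bool) → Bool) : ℕ :=
  sSup { m | ∃ X : List (Fin n → Bool), IsChain X ∧ decOn f X = m }

/-- Boolean formulas: finite trees built from variable leaves, constant leaves,
binary AND/OR nodes and unary NOT nodes. -/
inductive Formula (n : ℕ) : Type
  | var : Fin n → Formula n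
  | const : Bool → Formula n
  | and : Formula n → Formula n → Formula n
  | or : Formula n → Formula n → Formula n
  | not : Formula n → Formula n

/-- Evaluation of a formula on an input. -/
def Formula.eval {n : ℕ} (x : Fin n → Bool) : Formula n → Bool
  | .var i => x i
  | .const b => b
  | .and C D => C.eval x && D.eval x
  | .or C D => C.eval x || D.eval x
  | .not C => !(C.eval x)

/-- `not(C)`: the number of NOT nodes of a formula. -/
def Formula.notCount {n : ℕ} : Formula n → ℕ
  | .var _ => 0
  | .const _ => 0
  | .and C D => C.notCount + D.notCount
  | .or C D => C.notCount + D.notCount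
  | .not C => C.notCount + 1

/-- `not_d(C, x)`: the number of NOT nodes of `C` in the *down* state on input `x`,
i.e. whose input subformula evaluates to `1`. -/
def Formula.notDown {n : ℕ} (x : Fin n → Bool) : Formula n → ℕ
  | .var _ => 0
  | .const _ => 0
  | .and C D => C.notDown x + D.notDown x
  | .or C D => C.notDown x + D.notDown x
  | .not C => C.notDown x + (if C.eval x = true then 1 else 0)

/-- A formula computes a Boolean function `f` if it evaluates to `f x` on every input `x`. -/
def Formula.Computes {n : ℕ} (C : Formula n) (f : (Fin n → Bool) → Bool) : Prop :=
  ∀ x, C.eval x = f x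

/-- `I_f(f)`: the inversion complexity of `f` in formulas, the minimum number of
NOT nodes over all formulas computing `f`. -/
noncomputable def invFormula {n : ℕ} (f : (Fin n → Bool) → Bool) : ℕ :=
  sInf { k | ∃ C : Formula n, C.Computes f ∧ C.notCount = k }

/-- The set `S` of all vectors `x` such that every chain starting with `x`
has decrease `0` with respect to `f`. -/
def startSet {n : ℕ} (f : (Fin n → Bool) → Bool) : Set (Fin n → Bool) :=
  { x | ∀ X : List (Fin n → Bool), IsChain X → X.head? = some x → decOn f X = 0 }

/-- A gate of a circuit (straight-line program): an input variable, a constant,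
or an AND/OR/NOT of earlier gates (referenced by position). -/
inductive GateOp (n : ℕ) : Type
  | var : Fin n → GateOp n
  | const : Bool → GateOp n
  | and : ℕ → ℕ → GateOp n
  | or : ℕ → ℕ → GateOp n
  | not : ℕ → GateOp n

/-- A gate placed at position `i` may only reference strictly earlier positions. -/
def GateOp.refsLt {n : ℕ} : GateOp n → ℕ → Prop
  | .var _, _ => True
  | .const _, _ => True
  | .and j k, i => j < i ∧ k < i
  | .or j k, i => j < i ∧ k < i
  | .not j, i => j < i

/-- Evaluate a gate given the input `x` and the values of the earlier gates. -/
def GateOp.eval {n : ℕ} (x : Fin n → Bool) (vals : List Bool) : GateOp n → Bool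
  | .var i => x i
  | .const b => b
  | .and j k => vals.getD j false && vals.getD k false
  | .or j k => vals.getD j false || vals.getD k false
  | .not j => !(vals.getD j false)

/-- An acyclic Boolean circuit (gates have arbitrary fan-out), given as a
nonempty straight-line program; the output is the last gate. -/
structure Circuit (n : ℕ) : Type where
  gates : List (GateOp n)
  nonempty : gates ≠ []
  wf : ∀ (i : ℕ) (h : i < gates.length), (gates.get ⟨i, h⟩).refsLt i

/-- The list of values of all gates of the circuit on input `x`. -/
def Circuit.evalList {n : ℕ} (C : Circuit n) (x : Fin n → Bool) : List Bool :=
  C.gates.foldl (fun vals g => vals ++ [g.eval x vals]) []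

/-- The output of the circuit on input `x`: the value of the designated
(output) gate, i.e. the last gate. -/
def Circuit.eval {n : ℕ} (C : Circuit n) (x : Fin n → Bool) : Bool :=
  (C.evalList x).getLastD false

/-- The number of NOT gates of a circuit. -/
def Circuit.notGates {n : ℕ} (C : Circuit n) : ℕ :=
  (C.gates.filter fun g => match g with | .not _ => true | _ => false).length

/-- A circuit computes `f` if its output is `f x` on every input `x`. -/
def Circuit.Computes {n : ℕ} (C : Circuit n) (f : (Fin n → Bool) → Bool) : Prop :=
  ∀ x, C.eval x = f x

/-- `I(f)`: the inversion complexity of `f` in circuits, the minimum number of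
NOT gates over all circuits computing `f`. -/
noncomputable def invCircuit {n : ℕ} (f : (Fin n → Bool) → Bool) : ℕ :=
  sInf { k | ∃ C : Circuit n, C.Computes f ∧ C.notGates = k }

section Part1

variable {n : ℕ}

abbrev V (n : ℕ) := Fin n → Bool
abbrev Fn (n : ℕ) := V n → Bool

@[simp] lemma decOn_nil (f : Fn n) : decOn f [] = 0 := rfl
@[simp] lemma decOn_single (f : Fn n) (a : V n) : decOn f [a] = 0 := rfl
@[simp] lemma decOn_cons_cons (f : Fn n) (a b : V n) (t : List (V n)) :
    decOn f (a :: b :: t) = (if f a = true ∧ f b = false then 1 else 0) + decOn f (b :: t) := rfl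

lemma decOn_congr {f g : Fn n} : ∀ {X : List (V n)}, (∀ a ∈ X, f a = g a) → decOn f X = decOn g X
  | [], _ => rfl
  | [a], _ => rfl
  | a :: b :: t, h => by
      have ht : decOn f (b :: t) = decOn g (b :: t) :=
        decOn_congr (fun a ha => h a (List.mem_cons_of_mem _ ha))
      simp only [decOn_cons_cons, ht, h a (by simp), h b (by simp)]

lemma decOn_append_le (f : Fn n) : ∀ (P S : List (V n)),
    decOn f (P ++ S) ≤ decOn f P + 1 + decOn f S
  | [], S => by simp
  | [a], S => by
      cases S with
      | nil => simp
      | cons s t => simp only [List.singleton_append, decOn_cons_cons]; split <;> omega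
  | a :: b :: t, S => by
      have := decOn_append_le f (b :: t) S
      simp only [List.cons_append, decOn_cons_cons] at *
      omega

lemma decOn_le_length (f : Fn n) : ∀ (X : List (V n)), decOn f X ≤ X.length
  | [] => by simp
  | [a] => by simp
  | a :: b :: t => by
      have := decOn_le_length f (b :: t)
      simp only [decOn_cons_cons, List.length_cons] at *
      split <;> omega

lemma monotone_not_dec {f : Fn n} (hf : Monotone f) :
    ∀ {X : List (V n)}, IsChain X → decOn f X = 0
  | [], _ => rfl
  | [a], _ => rfl
  | a :: b :: t, h => by
      have hab : a < b := (List.isChain_cons_cons.mp h).1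
      have ht : IsChain (b :: t) := (List.isChain_cons_cons.mp h).2
      have : ¬(f a = true ∧ f b = false) := by
        rintro ⟨h1, h2⟩
        have := hf hab.le
        rw [h1, h2] at this
        exact absurd this (by simp)
      simp [decOn_cons_cons, this, monotone_not_dec hf ht]

/-- weight of a Boolean vector -/
def wt (x : V n) : ℕ := (Finset.univ.filter (fun i => x i = true)).card

lemma wt_lt_wt {x y : V n} (h : x < y) : wt x < wt y := by
  have hle := le_of_lt h
  obtain ⟨i, hi⟩ : ∃ i, x i ≠ y i := by
    by_contra hc
    push_neg at hc
    exact h.ne (funext hc)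
  have hlei : x i = true → y i = true := Bool.le_iff_imp.mp (hle i)
  have hxi : x i = false := by
    cases hx : x i
    · rfl
    · exact absurd (hx.trans (hlei hx).symm) hi
  have hyi : y i = true := by
    cases hy : y i
    · exact absurd (hxi.trans hy.symm) hi
    · rfl
  apply Finset.card_lt_card
  rw [Finset.ssubset_iff_of_subset]
  · exact ⟨i, by simp [hyi], by simp [hxi]⟩
  · intro j hj
    simp only [Finset.mem_filter, Finset.mem_univ, true_and] at *
    exact Bool.le_iff_imp.mp (hle j) hj

lemma chain_length_le {X : List (V n)} (h : IsChain X) : X.length ≤ n + 1 := by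
  have hp : X.Pairwise (· < ·) := List.isChain_iff_pairwise.mp h
  have hmap : (X.map wt).Pairwise (· < ·) := by
    rw [List.pairwise_map]
    exact hp.imp (fun h => wt_lt_wt h)
  have hnd : (X.map wt).Nodup := hmap.imp (fun h => Nat.ne_of_lt h)
  have hsub : ∀ m ∈ X.map wt, m ∈ Finset.range (n + 1) := by
    intro m hm
    obtain ⟨x, _, rfl⟩ := List.mem_map.mp hm
    have : wt x ≤ n := by
      have := Finset.card_filter_le (Finset.univ : Finset (Fin n)) (fun i => x i = true)
      simpa [wt] using this
    simp [Nat.lt_succ_iff, this]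
  have := Finset.card_le_card (Finset.subset_iff.mpr (fun {m} hm => hsub m (List.mem_toFinset.mp hm)))
    (s := (X.map wt).toFinset)
  rw [List.toFinset_card_of_nodup hnd] at this
  simpa using this

lemma decSet_bddAbove (f : Fn n) :
    BddAbove { m | ∃ X : List (V n), IsChain X ∧ decOn f X = m } := by
  refine ⟨n + 1, ?_⟩
  rintro m ⟨X, hX, rfl⟩
  exact le_trans (decOn_le_length f X) (chain_length_le hX)

lemma decOn_le_dec (f : Fn n) {X : List (V n)} (hX : IsChain X) : decOn f X ≤ dec f :=
  le_csSup (decSet_bddAbove f) ⟨X, hX, rfl⟩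

lemma dec_le (f : Fn n) {K : ℕ} (h : ∀ X : List (V n), IsChain X → decOn f X ≤ K) :
    dec f ≤ K := by
  refine csSup_le ⟨0, [], ?_, rfl⟩ ?_
  · exact List.isChain_nil
  · rintro m ⟨X, hX, rfl⟩
    exact h X hX

end Part1
section Part3

variable {n : ℕ}

/-- One evaluation step. -/
def step (x : V n) (vals : List Bool) (g : GateOp n) : List Bool := vals ++ [g.eval x vals]

lemma evalList_def (C : Circuit n) (x : V n) :
    C.evalList x = C.gates.foldl (step x) [] := rfl

lemma foldl_step_extend (x : V n) : ∀ (hs : List (GateOp n)) (init : List Bool),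
    ∃ extra, hs.foldl (step x) init = init ++ extra
  | [], init => ⟨[], by simp⟩
  | g :: hs, init => by
      obtain ⟨e, he⟩ := foldl_step_extend x hs (step x init g)
      refine ⟨[g.eval x init] ++ e, ?_⟩
      simp only [step] at he
      simp [he, step]

lemma foldl_step_length (x : V n) : ∀ (hs : List (GateOp n)) (init : List Bool),
    (hs.foldl (step x) init).length = init.length + hs.length
  | [], init => by simp
  | g :: hs, init => by
      simp only [List.foldl_cons, foldl_step_length x hs, step, List.length_append,
        List.length_cons, List.length_nil]
      omega

lemma foldl_step_getD {x : V n} (hs : List (GateOp n)) {init : List Bool} {i : ℕ}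
    (h : i < init.length) :
    (hs.foldl (step x) init).getD i false = init.getD i false := by
  obtain ⟨e, he⟩ := foldl_step_extend x hs init
  rw [he, List.getD_append _ _ _ _ h]

/-- the values of gates of `gs` on input `x`, as a raw list of gates -/
def elist (x : V n) (gs : List (GateOp n)) : List Bool := gs.foldl (step x) []

lemma elist_length (x : V n) (gs : List (GateOp n)) : (elist x gs).length = gs.length := by
  simp [elist, foldl_step_length]

lemma elist_concat (x : V n) (gs : List (GateOp n)) (g : GateOp n) :
    elist x (gs ++ [g]) = elist x gs ++ [g.eval x (elist x gs)] := by
  simp [elist, List.foldl_append, step]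

lemma elist_prefix {x : V n} (gs hs : List (GateOp n)) {i : ℕ} (h : i < gs.length) :
    (elist x (gs ++ hs)).getD i false = (elist x gs).getD i false := by
  have h2 : elist x (gs ++ hs) = List.foldl (step x) (elist x gs) hs := by
    rw [elist, List.foldl_append]; rfl
  rw [h2]
  exact foldl_step_getD hs (by rw [elist_length]; omega)

lemma elist_middle (x : V n) (gs : List (GateOp n)) (g₁ g₂ : GateOp n)
    (hs : List (GateOp n)) (h : g₁.eval x (elist x gs) = g₂.eval x (elist x gs)) :
    elist x (gs ++ g₁ :: hs) = elist x (gs ++ g₂ :: hs) := by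
  have h1 : ∀ g : GateOp n, gs ++ g :: hs = (gs ++ [g]) ++ hs := by simp
  have e : ∀ g : GateOp n, elist x (gs ++ [g] ++ hs) = List.foldl (step x) (elist x (gs ++ [g])) hs := by
    intro g; rw [elist, List.foldl_append]; rfl
  rw [h1 g₁, h1 g₂, e g₁, e g₂, elist_concat, elist_concat, h]

/-- whether a gate is a NOT gate -/
def isNot : GateOp n → Bool
  | .not _ => true
  | _ => false

lemma notGates_eq (C : Circuit n) : C.notGates = (C.gates.filter isNot).length := by
  have : ∀ g : GateOp n, (fun g => match g with | GateOp.not _ => true | _ => false) g = isNot g := by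
    intro g; cases g <;> rfl
  simp [Circuit.notGates, List.filter_congr (fun g _ => this g)]

lemma bool_and_mono {a a' b b' : Bool} (h1 : a ≤ a') (h2 : b ≤ b') : (a && b) ≤ (a' && b') := by
  cases a <;> cases a' <;> cases b <;> cases b' <;> simp_all
lemma bool_or_mono {a a' b b' : Bool} (h1 : a ≤ a') (h2 : b ≤ b') : (a || b) ≤ (a' || b') := by
  cases a <;> cases a' <;> cases b <;> cases b' <;> simp_all

/-- all gate values of a NOT-free straight-line program are monotone -/
lemma elist_monotone : ∀ (gs : List (GateOp n)), (∀ g ∈ gs, isNot g = false) →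
    ∀ i : ℕ, Monotone (fun x => (elist x gs).getD i false) := by
  intro gs
  induction gs using List.reverseRecOn with
  | nil => intro _ i; simp [elist, step]; exact monotone_const
  | append_singleton gs g ih =>
    intro hnf i
    have ih' := ih (fun g' hg' => hnf g' (by simp [hg']))
    rcases lt_trichotomy i gs.length with hi | hi | hi
    · have : ∀ x : V n, (elist x (gs ++ [g])).getD i false = (elist x gs).getD i false :=
        fun x => elist_prefix gs [g] hi
      simpa only [this] using ih' i
    · have hv : ∀ x : V n, (elist x (gs ++ [g])).getD i false = g.eval x (elist x gs) := by
        intro x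
        rw [elist_concat, List.getD_append_right _ _ _ _ (by rw [elist_length]; omega)]
        simp [elist_length, hi]
      simp only [hv]
      cases g with
      | var j => exact fun x y hxy => hxy j
      | const b => exact monotone_const
      | and j k => exact fun x y hxy =>
          bool_and_mono (ih' j hxy) (ih' k hxy)
      | or j k => exact fun x y hxy =>
          bool_or_mono (ih' j hxy) (ih' k hxy)
      | not j => exact absurd (hnf (.not j) (by simp)) (by simp [isNot])
    · have : ∀ x : V n, (elist x (gs ++ [g])).getD i false = false := by
        intro x
        apply List.getD_eq_default
        rw [elist_length]
        simp
        omega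
      simp only [this]
      exact monotone_const

end Part3
section Part4

variable {n : ℕ}

/-- A circuit `C` exposes a function `g` if some gate of `C` computes `g`. -/
def Exposes (C : Circuit n) (g : Fn n) : Prop :=
  ∃ i, i < C.gates.length ∧ ∀ x, (C.evalList x).getD i false = g x

/-- `Avail k G`: a single circuit with at most `k` NOT gates whose gate values include
all functions in `G`. -/
def Avail (k : ℕ) (G : Set (Fn n)) : Prop :=
  ∃ C : Circuit n, C.notGates ≤ k ∧ ∀ g ∈ G, Exposes C g

lemma refsLt_mono {g : GateOp n} {i i' : ℕ} (h : g.refsLt i) (hii : i ≤ i') : g.refsLt i' := by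
  cases g <;> simp [GateOp.refsLt] at * <;> omega

/-- appending a gate to a circuit -/
def Circuit.push (C : Circuit n) (g : GateOp n) (hg : g.refsLt C.gates.length) : Circuit n where
  gates := C.gates ++ [g]
  nonempty := by simp
  wf := by
    intro i hi
    rcases lt_or_ge i C.gates.length with h | h
    · rw [List.get_eq_getElem, List.getElem_append_left h]
      exact C.wf i h
    · have hi' : i = C.gates.length := by simp at hi; omega
      have : (C.gates ++ [g]).get ⟨i, hi⟩ = g := by
        subst hi'
        simp
      rw [this]
      exact refsLt_mono hg (by omega)

lemma push_evalList (C : Circuit n) (g : GateOp n) (hg : g.refsLt C.gates.length) (x : V n) :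
    (C.push g hg).evalList x = C.evalList x ++ [g.eval x (C.evalList x)] :=
  elist_concat x C.gates g

lemma push_getD_old (C : Circuit n) (g : GateOp n) (hg : g.refsLt C.gates.length) (x : V n)
    {i : ℕ} (hi : i < C.gates.length) :
    ((C.push g hg).evalList x).getD i false = (C.evalList x).getD i false :=
  elist_prefix C.gates [g] hi

lemma evalList_length (C : Circuit n) (x : V n) : (C.evalList x).length = C.gates.length :=
  elist_length x C.gates

lemma push_getD_new (C : Circuit n) (g : GateOp n) (hg : g.refsLt C.gates.length) (x : V n) :
    ((C.push g hg).evalList x).getD C.gates.length false = g.eval x (C.evalList x) := by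
  rw [push_evalList, List.getD_append_right _ _ _ _ (by rw [evalList_length]),
    evalList_length]
  simp

lemma push_notGates (C : Circuit n) (g : GateOp n) (hg : g.refsLt C.gates.length) :
    (C.push g hg).notGates = C.notGates + (if isNot g then 1 else 0) := by
  rw [notGates_eq, notGates_eq]
  show (List.filter isNot (C.gates ++ [g])).length = _
  rw [List.filter_append]
  cases h : isNot g <;> simp [h]

lemma push_exposes_old {C : Circuit n} {g : Fn n} (hexp : Exposes C g)
    (op : GateOp n) (hop : op.refsLt C.gates.length) : Exposes (C.push op hop) g := by
  obtain ⟨i, hi, hv⟩ := hexp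
  refine ⟨i, ?_, fun x => ?_⟩
  · show i < (C.gates ++ [op]).length
    simp; omega
  · rw [push_getD_old C _ hop x hi]; exact hv x

lemma push_exposes_new {C : Circuit n} {g : Fn n}
    (op : GateOp n) (hop : op.refsLt C.gates.length)
    (hval : ∀ x, op.eval x (C.evalList x) = g x) : Exposes (C.push op hop) g := by
  refine ⟨C.gates.length, ?_, fun x => ?_⟩
  · show C.gates.length < (C.gates ++ [op]).length
    simp
  · rw [push_getD_new]; exact hval x

lemma avail_mono {k : ℕ} {G G' : Set (Fn n)} (hsub : G' ⊆ G) (h : Avail k G) : Avail k G' := by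
  obtain ⟨C, h1, h2⟩ := h
  exact ⟨C, h1, fun g hg => h2 g (hsub hg)⟩

lemma avail_le {k k' : ℕ} {G : Set (Fn n)} (hkk : k ≤ k') (h : Avail k G) : Avail k' G := by
  obtain ⟨C, h1, h2⟩ := h
  exact ⟨C, le_trans h1 hkk, h2⟩

lemma avail_empty : Avail (n := n) 0 ∅ := by
  refine ⟨⟨[.const false], by simp, ?_⟩, ?_, ?_⟩
  · intro i hi
    have : i = 0 := by simp at hi; omega
    subst this
    simp [GateOp.refsLt]
  · simp [notGates_eq, isNot]
  · simp

lemma avail_insert_const {k : ℕ} {G : Set (Fn n)} (h : Avail k G) (b : Bool) :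
    Avail k (insert (fun _ => b) G) := by
  obtain ⟨C, h1, h2⟩ := h
  refine ⟨C.push (.const b) trivial, by rw [push_notGates C (.const b) trivial]; simpa [isNot], ?_⟩
  intro g hg
  rcases hg with rfl | hg
  · exact push_exposes_new _ _ (fun x => rfl)
  · exact push_exposes_old (h2 g hg) _ _

lemma avail_insert_var {k : ℕ} {G : Set (Fn n)} (h : Avail k G) (j : Fin n) :
    Avail k (insert (fun x => x j) G) := by
  obtain ⟨C, h1, h2⟩ := h
  refine ⟨C.push (.var j) trivial, by rw [push_notGates C (.var j) trivial]; simpa [isNot], ?_⟩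
  intro g hg
  rcases hg with rfl | hg
  · exact push_exposes_new _ _ (fun x => rfl)
  · exact push_exposes_old (h2 g hg) _ _

lemma avail_insert_and {k : ℕ} {G : Set (Fn n)} {a b : Fn n}
    (ha : a ∈ G) (hb : b ∈ G) (h : Avail k G) :
    Avail k (insert (fun x => a x && b x) G) := by
  obtain ⟨C, h1, h2⟩ := h
  obtain ⟨i, hi, hvi⟩ := h2 a ha
  obtain ⟨j, hj, hvj⟩ := h2 b hb
  refine ⟨C.push (.and i j) ⟨hi, hj⟩, by rw [push_notGates C (.and i j) ⟨hi, hj⟩]; simpa [isNot], ?_⟩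
  intro g hg
  rcases hg with rfl | hg
  · exact push_exposes_new _ _ (fun x => by simp only [GateOp.eval, hvi x, hvj x])
  · exact push_exposes_old (h2 g hg) _ _

lemma avail_insert_or {k : ℕ} {G : Set (Fn n)} {a b : Fn n}
    (ha : a ∈ G) (hb : b ∈ G) (h : Avail k G) :
    Avail k (insert (fun x => a x || b x) G) := by
  obtain ⟨C, h1, h2⟩ := h
  obtain ⟨i, hi, hvi⟩ := h2 a ha
  obtain ⟨j, hj, hvj⟩ := h2 b hb
  refine ⟨C.push (.or i j) ⟨hi, hj⟩, by rw [push_notGates C (.or i j) ⟨hi, hj⟩]; simpa [isNot], ?_⟩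
  intro g hg
  rcases hg with rfl | hg
  · exact push_exposes_new _ _ (fun x => by simp only [GateOp.eval, hvi x, hvj x])
  · exact push_exposes_old (h2 g hg) _ _

lemma avail_insert_not {k : ℕ} {G : Set (Fn n)} {a : Fn n}
    (ha : a ∈ G) (h : Avail k G) :
    Avail (k + 1) (insert (fun x => !(a x)) G) := by
  obtain ⟨C, h1, h2⟩ := h
  obtain ⟨i, hi, hvi⟩ := h2 a ha
  refine ⟨C.push (.not i) hi, by rw [push_notGates C (.not i) hi]; simp [isNot]; omega, ?_⟩
  intro g hg
  rcases hg with rfl | hg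
  · exact push_exposes_new _ _ (fun x => by simp only [GateOp.eval, hvi x])
  · exact push_exposes_old (h2 g hg) _ _

lemma avail_computes {k : ℕ} {G : Set (Fn n)} {f : Fn n}
    (hf : f ∈ G) (h : Avail k G) :
    ∃ C : Circuit n, C.Computes f ∧ C.notGates ≤ k := by
  obtain ⟨C, h1, h2⟩ := h
  obtain ⟨i, hi, hvi⟩ := h2 f hf
  refine ⟨C.push (.and i i) ⟨hi, hi⟩, ?_, by rw [push_notGates C (.and i i) ⟨hi, hi⟩]; simpa [isNot]⟩
  intro x
  show ((C.push (.and i i) ⟨hi, hi⟩).evalList x).getLastD false = f x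
  rw [push_evalList C (.and i i) ⟨hi, hi⟩]
  rw [List.getLastD_concat]
  simp only [GateOp.eval, hvi x, Bool.and_self]

end Part4
section Part5

variable {n : ℕ}

/-- renaming of variables in a formula -/
def Formula.rename {a b : ℕ} (ρ : Fin a → Fin b) : Formula a → Formula b
  | .var i => .var (ρ i)
  | .const c => .const c
  | .and C D => .and (C.rename ρ) (D.rename ρ)
  | .or C D => .or (C.rename ρ) (D.rename ρ)
  | .not C => .not (C.rename ρ)

lemma Formula.eval_rename {a b : ℕ} (ρ : Fin a → Fin b) (φ : Formula a) (x : Fin b → Bool) :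
    (φ.rename ρ).eval x = φ.eval (x ∘ ρ) := by
  induction φ with
  | var i => rfl
  | const c => rfl
  | and C D ihC ihD => simp [Formula.rename, Formula.eval, ihC, ihD]
  | or C D ihC ihD => simp [Formula.rename, Formula.eval, ihC, ihD]
  | not C ihC => simp [Formula.rename, Formula.eval, ihC]

lemma Formula.notCount_rename {a b : ℕ} (ρ : Fin a → Fin b) (φ : Formula a) :
    (φ.rename ρ).notCount = φ.notCount := by
  induction φ with
  | var i => rfl
  | const c => rfl
  | and C D ihC ihD => simp [Formula.rename, Formula.notCount, ihC, ihD]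
  | or C D ihC ihD => simp [Formula.rename, Formula.notCount, ihC, ihD]
  | not C ihC => simp [Formula.rename, Formula.notCount, ihC]

/-- every monotone Boolean function is computed by a NOT-free formula -/
lemma monotone_formula : ∀ {m : ℕ} (f : Fn m), Monotone f →
    ∃ φ : Formula m, φ.notCount = 0 ∧ ∀ x, φ.eval x = f x := by
  intro m
  induction m with
  | zero =>
    intro f _
    refine ⟨.const (f (fun i => i.elim0)), rfl, fun x => ?_⟩
    have : x = fun i => i.elim0 := funext fun i => i.elim0
    rw [Formula.eval, this]
  | succ m ih =>
    intro f hf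
    have hc : ∀ b, Monotone (fun y : V m => f (Fin.cons b y)) := by
      intro b y y' hyy
      apply hf
      intro i
      refine Fin.cases ?_ ?_ i
      · simp
      · intro j; simpa using hyy j
    obtain ⟨φ₀, hn0, hv0⟩ := ih _ (hc false)
    obtain ⟨φ₁, hn1, hv1⟩ := ih _ (hc true)
    refine ⟨.or (.and (.var 0) (φ₁.rename Fin.succ)) (φ₀.rename Fin.succ), ?_, ?_⟩
    · simp [Formula.notCount, Formula.notCount_rename, hn0, hn1]
    · intro x
      have hx : x ∘ Fin.succ = Fin.tail x := rfl
      have hcons : Fin.cons (x 0) (Fin.tail x) = x := Fin.cons_self_tail x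
      simp only [Formula.eval, Formula.eval_rename, hx, hv0, hv1]
      cases h0 : x 0 with
      | false =>
        simp only [Bool.false_and, Bool.false_or]
        conv_rhs => rw [← hcons, h0]
      | true =>
        simp only [Bool.true_and]
        have hle : f (Fin.cons false (Fin.tail x)) ≤ f (Fin.cons true (Fin.tail x)) := by
          apply hf
          intro i
          refine Fin.cases ?_ ?_ i <;> simp
        conv_rhs => rw [← hcons, h0]
        cases hq : f (Fin.cons false (Fin.tail x)) with
        | false => simp
        | true => simp [Bool.le_iff_imp.mp hle hq]

/-- monotone closure over a set of available functions -/
inductive MClosure (G : Set (Fn n)) : Fn n → Prop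
  | mem {g} : g ∈ G → MClosure G g
  | const (b) : MClosure G (fun _ => b)
  | mand {a b} : MClosure G a → MClosure G b → MClosure G (fun x => a x && b x)
  | mor {a b} : MClosure G a → MClosure G b → MClosure G (fun x => a x || b x)
  | mono {g} : Monotone g → MClosure G g

lemma MClosure.mono_set {G H : Set (Fn n)} (hGH : G ⊆ H) {g : Fn n}
    (h : MClosure G g) : MClosure H g := by
  induction h with
  | mem hg => exact .mem (hGH hg)
  | const b => exact .const b
  | mand _ _ iha ihb => exact .mand iha ihb
  | mor _ _ iha ihb => exact .mor iha ihb
  | mono hg => exact .mono hg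

/-- NOT-free formulas can be absorbed into an availability circuit -/
lemma avail_formula {k : ℕ} {H : Set (Fn n)} (φ : Formula n) (hφ : φ.notCount = 0)
    (h : Avail k H) : ∃ H', H ⊆ H' ∧ Avail k H' ∧ (fun x => φ.eval x) ∈ H' := by
  induction φ generalizing H with
  | var i =>
    exact ⟨insert (fun x => x i) H, Set.subset_insert _ _, avail_insert_var h i,
      Set.mem_insert _ _⟩
  | const b =>
    exact ⟨insert (fun _ => b) H, Set.subset_insert _ _, avail_insert_const h b,
      Set.mem_insert _ _⟩
  | and C D ihC ihD =>
    have hC : C.notCount = 0 := by simp [Formula.notCount] at hφ; omega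
    have hD : D.notCount = 0 := by simp [Formula.notCount] at hφ; omega
    obtain ⟨H₁, hs1, ha1, hm1⟩ := ihC hC h
    obtain ⟨H₂, hs2, ha2, hm2⟩ := ihD hD ha1
    refine ⟨insert (fun x => C.eval x && D.eval x) H₂,
      fun g hg => Set.mem_insert_of_mem _ (hs2 (hs1 hg)),
      avail_insert_and (hs2 hm1) hm2 ha2, Set.mem_insert _ _⟩
  | or C D ihC ihD =>
    have hC : C.notCount = 0 := by simp [Formula.notCount] at hφ; omega
    have hD : D.notCount = 0 := by simp [Formula.notCount] at hφ; omega
    obtain ⟨H₁, hs1, ha1, hm1⟩ := ihC hC h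
    obtain ⟨H₂, hs2, ha2, hm2⟩ := ihD hD ha1
    refine ⟨insert (fun x => C.eval x || D.eval x) H₂,
      fun g hg => Set.mem_insert_of_mem _ (hs2 (hs1 hg)),
      avail_insert_or (hs2 hm1) hm2 ha2, Set.mem_insert _ _⟩
  | not C ihC =>
    exact absurd hφ (by simp [Formula.notCount])

lemma mclosure_avail {k : ℕ} {G H : Set (Fn n)} {z : Fn n}
    (hz : MClosure G z) (hGH : G ⊆ H) (h : Avail k H) :
    ∃ H', H ⊆ H' ∧ Avail k H' ∧ z ∈ H' := by
  induction hz generalizing H with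
  | mem hg => exact ⟨H, le_refl _, h, hGH hg⟩
  | const b =>
    exact ⟨insert _ H, Set.subset_insert _ _, avail_insert_const h b, Set.mem_insert _ _⟩
  | @mand a b _ _ iha ihb =>
    obtain ⟨H₁, hs1, ha1, hm1⟩ := iha hGH h
    obtain ⟨H₂, hs2, ha2, hm2⟩ := ihb (le_trans hGH hs1) ha1
    exact ⟨insert (fun x => a x && b x) H₂,
      fun g hg => Set.mem_insert_of_mem _ (hs2 (hs1 hg)),
      avail_insert_and (hs2 hm1) hm2 ha2, Set.mem_insert _ _⟩
  | @mor a b _ _ iha ihb =>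
    obtain ⟨H₁, hs1, ha1, hm1⟩ := iha hGH h
    obtain ⟨H₂, hs2, ha2, hm2⟩ := ihb (le_trans hGH hs1) ha1
    exact ⟨insert (fun x => a x || b x) H₂,
      fun g hg => Set.mem_insert_of_mem _ (hs2 (hs1 hg)),
      avail_insert_or (hs2 hm1) hm2 ha2, Set.mem_insert _ _⟩
  | @mono g hg =>
    obtain ⟨φ, hφ, hv⟩ := monotone_formula g hg
    obtain ⟨H', hs, ha, hm⟩ := avail_formula φ hφ h
    have : (fun x => φ.eval x) = g := funext hv
    exact ⟨H', hs, ha, this ▸ hm⟩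

lemma mclosure_avail_list {k : ℕ} {G H : Set (Fn n)}
    (hGH : G ⊆ H) (h : Avail k H) :
    ∀ (zs : List (Fn n)), (∀ z ∈ zs, MClosure G z) →
    ∃ H', H ⊆ H' ∧ Avail k H' ∧ ∀ z ∈ zs, z ∈ H' := by
  intro zs
  induction zs generalizing H with
  | nil => exact fun _ => ⟨H, le_refl _, h, by simp⟩
  | cons z zs ih =>
    intro hcl
    obtain ⟨H₁, hs1, ha1, hm1⟩ := mclosure_avail (hcl z (by simp)) hGH h
    obtain ⟨H₂, hs2, ha2, hm2⟩ := ih (le_trans hGH hs1) ha1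
      (fun z' hz' => hcl z' (by simp [hz']))
    refine ⟨H₂, le_trans hs1 hs2, ha2, ?_⟩
    intro z' hz'
    rcases List.mem_cons.mp hz' with rfl | hz'
    · exact hs2 hm1
    · exact hm2 z' hz'

end Part5
section Part6

variable {n : ℕ}

lemma inverter : ∀ (k : ℕ) (g : ℕ → Fn n) (G : Set (Fn n)) (j : ℕ),
    (∀ i i' (x : V n), i ≤ i' → g i' x ≤ g i x) →
    (∀ i (x : V n), 2 ^ k - 1 ≤ i → g i x = false) →
    (∀ i, i < 2 ^ k - 1 → g i ∈ G) →
    Avail j G →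
    ∃ G', G ⊆ G' ∧ Avail (j + k) G' ∧ ∀ i, (fun x => !(g i x)) ∈ G' := by
  intro k
  induction k with
  | zero =>
    intro g G j hsort hbound hmem h
    refine ⟨insert (fun _ => true) G, Set.subset_insert _ _,
      by simpa using avail_insert_const h true, ?_⟩
    intro i
    have : (fun x => !(g i x)) = (fun _ => true) :=
      funext fun x => by rw [hbound i x (by norm_num)]; rfl
    rw [this]; exact Set.mem_insert _ _
  | succ k ih =>
    intro g G j hsort hbound hmem h
    set t := 2 ^ k with ht
    have h2t : 2 ^ (k+1) = 2 * t := by rw [pow_succ]; ring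
    have ht1 : 1 ≤ t := Nat.one_le_pow k 2 (by norm_num)
    -- step 1 : make ¬mid available
    have hmidmem : g (t - 1) ∈ G := hmem _ (by rw [h2t]; omega)
    have h1 : Avail (j+1) (insert (fun x => !(g (t-1) x)) G) := avail_insert_not hmidmem h
    set nm : Fn n := fun x => !(g (t-1) x) with hnm
    set G₁ : Set (Fn n) := insert nm G with hG₁
    -- step 2 : insert the merged sequence z
    set z : ℕ → Fn n := fun i x => (g i x && !(g (t-1) x)) || g (i + t) x with hz
    have hcl : ∀ w ∈ (List.range (t-1)).map z, MClosure G₁ w := by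
      intro w hw
      obtain ⟨i, hi, rfl⟩ := List.mem_map.mp hw
      rw [List.mem_range] at hi
      have hgi : g i ∈ G₁ := Set.mem_insert_of_mem _ (hmem i (by rw [h2t]; omega))
      have hgit : g (i + t) ∈ G₁ := Set.mem_insert_of_mem _ (hmem _ (by rw [h2t]; omega))
      exact .mor (.mand (.mem hgi) (.mem (Set.mem_insert _ _))) (.mem hgit)
    obtain ⟨G₂, hs2, ha2, hm2⟩ := mclosure_avail_list subset_rfl h1 _ hcl
    -- step 3 : recursive inversion of z
    have hzsort : ∀ i i' (x : V n), i ≤ i' → z i' x ≤ z i x := by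
      intro i i' x hii
      exact bool_or_mono (bool_and_mono (hsort i i' x hii) le_rfl) (hsort _ _ x (by omega))
    have hzbound : ∀ i (x : V n), 2 ^ k - 1 ≤ i → z i x = false := by
      intro i x hi
      rw [← ht] at hi
      have h1' : g (i + t) x = false := hbound _ x (by rw [h2t]; omega)
      have h2' : g i x ≤ g (t-1) x := hsort _ _ x (by omega)
      simp only [hz, h1', Bool.or_false]
      cases hgx : g i x
      · rfl
      · rw [hgx] at h2'
        have : g (t-1) x = true := by
          cases hq : g (t-1) x
          · rw [hq] at h2'; exact absurd h2' (by decide)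
          · rfl
        rw [this]; rfl
    have hzmem : ∀ i, i < 2 ^ k - 1 → z i ∈ G₂ := by
      intro i hi
      rw [← ht] at hi
      exact hm2 _ (List.mem_map.mpr ⟨i, List.mem_range.mpr (by omega), rfl⟩)
    obtain ⟨G₃, hs3, ha3, hm3⟩ := ih z G₂ (j+1) hzsort hzbound hzmem ha2
    -- step 4 : recover all negations
    have hnmG₃ : nm ∈ G₃ := hs3 (hs2 (Set.mem_insert _ _))
    have hcl2 : ∀ w ∈ (List.range (2 ^ (k+1))).map (fun i => fun x => !(g i x)),
        MClosure G₃ w := by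
      intro w hw
      obtain ⟨i, hi, rfl⟩ := List.mem_map.mp hw
      rw [List.mem_range, h2t] at hi
      rcases lt_trichotomy i (t-1) with hit | hit | hit
      · have heq : (fun x => !(g i x)) = (fun x => !(z i x) && nm x) := by
          funext x
          have hca : g (t-1) x ≤ g i x := hsort _ _ x (by omega)
          simp only [hz, hnm]
          cases hc : g (t-1) x
          · have hb : g (i + t) x ≤ g (t-1) x := hsort _ _ x (by omega)
            rw [hc] at hb
            have hb' : g (i+t) x = false := by
              cases hq : g (i+t) x
              · rfl
              · rw [hq] at hb; exact absurd hb (by decide)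
            simp [hb', hc]
          · have ha' : g i x = true := by
              rw [hc] at hca
              cases hq : g i x
              · rw [hq] at hca; exact absurd hca (by decide)
              · rfl
            simp [ha', hc]
        rw [heq]
        exact .mand (.mem (hm3 i)) (.mem hnmG₃)
      · rw [hit, ← hnm]
        exact .mem hnmG₃
      · have hits : i - t + t = i := by omega
        have heq : (fun x => !(g i x)) = (fun x => !(z (i - t) x) || nm x) := by
          funext x
          have hbc : g i x ≤ g (t-1) x := hsort _ _ x (by omega)
          have hca : g (t-1) x ≤ g (i-t) x := hsort _ _ x (by omega)
          simp only [hz, hnm, hits]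
          cases hc : g (t-1) x
          · have hgi : g i x = false := by
              rw [hc] at hbc
              cases hq : g i x
              · rfl
              · rw [hq] at hbc; exact absurd hbc (by decide)
            simp [hgi, hc]
          · have hgi : g (i-t) x = true := by
              rw [hc] at hca
              cases hq : g (i-t) x
              · rw [hq] at hca; exact absurd hca (by decide)
              · rfl
            simp [hgi, hc]
        rw [heq]
        exact .mor (.mem (hm3 (i-t))) (.mem hnmG₃)
    obtain ⟨G₄, hs4, ha4, hm4⟩ := mclosure_avail_list subset_rfl ha3 _ hcl2
    refine ⟨G₄, ?_, ?_, ?_⟩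
    · exact fun a haG => hs4 (hs3 (hs2 (Set.mem_insert_of_mem _ haG)))
    · have harith : j + 1 + k = j + (k + 1) := by omega
      rw [← harith]; exact ha4
    · intro i
      rcases lt_or_ge i (2 ^ (k+1)) with hi | hi
      · exact hm4 _ (List.mem_map.mpr ⟨i, List.mem_range.mpr hi, rfl⟩)
      · have heq : (fun x => !(g i x)) = (fun x => !(g (2^(k+1) - 1) x)) := by
          funext x
          rw [hbound i x (by omega), hbound _ x (by omega)]
        rw [heq]
        exact hm4 _ (List.mem_map.mpr ⟨2^(k+1) - 1, List.mem_range.mpr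
          (by rw [h2t]; omega), rfl⟩)

end Part6
section Part7

variable {n : ℕ}

/-- `Alt f i x`: there is a chain of length `i` below `x` on which `f` alternates,
starting with value `true`. -/
def Alt (f : Fn n) (i : ℕ) (x : V n) : Prop :=
  ∃ L : List (V n), L.length = i ∧ IsChain L ∧
    (∀ j : Fin L.length, f (L.get j) = decide ((j : ℕ) % 2 = 0)) ∧ ∀ y ∈ L, y ≤ x

lemma alt_mono_x {f : Fn n} {i : ℕ} {x x' : V n} (hxx : x ≤ x') (h : Alt f i x) :
    Alt f i x' := by
  obtain ⟨L, h1, h2, h3, h4⟩ := h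
  exact ⟨L, h1, h2, h3, fun y hy => le_trans (h4 y hy) hxx⟩

lemma alt_anti_i {f : Fn n} {i i' : ℕ} {x : V n} (hii : i' ≤ i) (h : Alt f i x) :
    Alt f i' x := by
  obtain ⟨L, h1, h2, h3, h4⟩ := h
  refine ⟨L.take i', ?_, ?_, ?_, ?_⟩
  · rw [List.length_take]; omega
  · exact h2.sublist (List.take_sublist _ _)
  · intro j
    have hj : (j : ℕ) < L.length := by
      have h5 : (List.take i' L).length ≤ L.length := by
        rw [List.length_take]; omega
      exact lt_of_lt_of_le j.isLt h5
    have : (L.take i').get j = L.get ⟨j, hj⟩ := by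
      simp [List.getElem_take]
    rw [this]
    exact h3 ⟨j, hj⟩
  · exact fun y hy => h4 y (List.mem_of_mem_take hy)

lemma alt_zero (f : Fn n) (x : V n) : Alt f 0 x :=
  ⟨[], rfl, List.isChain_nil, fun j => absurd j.isLt (by simp), by simp⟩

lemma alt_succ {f : Fn n} {i : ℕ} {x : V n} (hfx : f x = decide (i % 2 = 0))
    (h : Alt f i x) : Alt f (i + 1) x := by
  obtain ⟨L, h1, h2, h3, h4⟩ := h
  refine ⟨L ++ [x], by simp [h1], ?_, ?_, ?_⟩
  · rw [IsChain, List.Chain', List.isChain_append]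
    refine ⟨h2, List.isChain_singleton x, ?_⟩
    intro a ha y hy
    simp only [List.head?_cons, Option.mem_def, Option.some.injEq] at hy
    subst hy
    have haL : a ∈ L := by
      rw [List.getLast?_eq_getElem?] at ha
      have hlen : L.length - 1 < L.length := by
        rcases L with _ | ⟨b, M⟩
        · simp at ha
        · simp
      rw [List.getElem?_eq_getElem hlen] at ha
      simp only [Option.mem_def, Option.some.injEq] at ha
      subst ha
      exact List.getElem_mem _
    refine lt_of_le_of_ne (h4 a haL) ?_
    -- a is the last element, with f-value of opposite parity to x
    rw [List.getLast?_eq_getElem?] at ha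
    have hlen : L.length - 1 < L.length := by
      rcases L with _ | ⟨b, M⟩
      · simp at ha
      · simp
    rw [List.getElem?_eq_getElem hlen] at ha
    simp only [Option.mem_def, Option.some.injEq] at ha
    have hfa : f a = decide ((L.length - 1) % 2 = 0) := by
      rw [← ha]
      exact h3 ⟨L.length - 1, hlen⟩
    intro hax
    rw [hax, hfx, h1] at hfa
    have hiff : (i % 2 = 0) ↔ ((i - 1) % 2 = 0) := by
      constructor
      · intro hh
        exact of_decide_eq_true (hfa ▸ decide_eq_true hh)
      · intro hh
        exact of_decide_eq_true (hfa.symm ▸ decide_eq_true hh)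
    have hi1 : 1 ≤ i := by omega
    omega
  · intro j
    rcases lt_or_ge (j : ℕ) L.length with hj | hj
    · have : (L ++ [x]).get j = L.get ⟨j, hj⟩ := by
        simp [List.getElem_append_left hj]
      rw [this]
      exact h3 ⟨j, hj⟩
    · have hj' : (j : ℕ) = L.length := by
        have := j.isLt
        simp at this
        omega
      have : (L ++ [x]).get j = x := by
        simp [List.get_eq_getElem, List.getElem_append_right hj]
      rw [this, hj', h1]
      exact hfx
  · intro y hy
    rcases List.mem_append.mp hy with hy | hy
    · exact h4 y hy
    · simp at hy
      subst hy
      exact le_rfl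

/-- alternating pattern forces many decreases -/
lemma pattern_length {f : Fn n} : ∀ (L : List (V n)) (p : ℕ),
    (∀ j : Fin L.length, f (L.get j) = decide (((j : ℕ) + p) % 2 = 0)) →
    L.length ≤ 2 * decOn f L + 1 + p % 2 := by
  intro L
  induction L with
  | nil => intro p _; simp
  | cons a M ih =>
    intro p hpat
    have hpat' : ∀ j : Fin M.length, f (M.get j) = decide (((j : ℕ) + (p+1)) % 2 = 0) := by
      intro j
      have hjlt : (j : ℕ) + 1 < (a :: M).length := by simp
      have := hpat ⟨(j : ℕ) + 1, hjlt⟩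
      have hget : (a :: M).get ⟨(j : ℕ) + 1, hjlt⟩ = M.get j := by simp
      rw [hget] at this
      rw [this]
      have harith : (j : ℕ) + 1 + p = (j : ℕ) + (p + 1) := by omega
      rw [harith]
    have hIH := ih (p+1) hpat'
    have hfa : f a = decide (p % 2 = 0) := by
      have := hpat ⟨0, by simp⟩
      simpa using this
    rcases M with _ | ⟨b, M'⟩
    · simp
    · have hfb : f b = decide ((p + 1) % 2 = 0) := by
        have := hpat' ⟨0, by simp⟩
        simpa using this
      rcases Nat.even_or_odd p with hp | hp
      · have hp2 : p % 2 = 0 := Nat.even_iff.mp hp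
        have hp12 : (p + 1) % 2 = 1 := by omega
        have hfa' : f a = true := by rw [hfa, hp2]; simp
        have hfb' : f b = false := by rw [hfb, hp12]; simp
        rw [decOn_cons_cons, if_pos ⟨hfa', hfb'⟩]
        simp only [List.length_cons] at *
        omega
      · have hp2 : p % 2 = 1 := Nat.odd_iff.mp hp
        have hfa' : f a = false := by rw [hfa, hp2]; simp
        rw [decOn_cons_cons, if_neg (by rintro ⟨h1, _⟩; rw [hfa'] at h1; exact absurd h1 (by decide))]
        simp only [List.length_cons] at *
        omega

lemma alt_le {f : Fn n} {i : ℕ} {x : V n} (h : Alt f i x) : i ≤ 2 * dec f + 1 := by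
  obtain ⟨L, h1, h2, h3, _⟩ := h
  have hp := pattern_length L 0 (by simpa using h3)
  have := decOn_le_dec f h2
  omega

open Classical in
/-- the monotone "alternation depth at least `i`" indicator -/
noncomputable def mfn (f : Fn n) (i : ℕ) : Fn n := fun x => decide (Alt f i x)

lemma mfn_monotone (f : Fn n) (i : ℕ) : Monotone (mfn f i) := by
  intro x y hxy
  rw [Bool.le_iff_imp]
  intro h
  exact decide_eq_true (alt_mono_x hxy (of_decide_eq_true h))

lemma mfn_anti (f : Fn n) {i i' : ℕ} (hii : i ≤ i') (x : V n) :
    mfn f i' x ≤ mfn f i x := by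
  rw [Bool.le_iff_imp]
  intro h
  exact decide_eq_true (alt_anti_i hii (of_decide_eq_true h))

lemma mfn_false {f : Fn n} {i : ℕ} (hi : 2 * dec f + 1 < i) (x : V n) :
    mfn f i x = false := by
  apply decide_eq_false
  intro h
  exact absurd (alt_le h) (by omega)

lemma exists_maximal_odd {f : Fn n} {x : V n} (hfx : f x = true) :
    ∃ i ≤ dec f, Alt f (2*i+1) x ∧ ¬ Alt f (2*i+2) x := by
  classical
  set P : ℕ → Prop := fun i => Alt f (2*i+1) x with hP
  have h0 : P 0 := by
    apply alt_succ (by simpa using hfx) (alt_zero f x)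
  set d := dec f with hd
  set i₀ := Nat.findGreatest P d with hi₀
  have hspec : P i₀ := Nat.findGreatest_spec (Nat.zero_le d) h0
  refine ⟨i₀, Nat.findGreatest_le d, hspec, ?_⟩
  intro hAlt
  have hnext : P (i₀ + 1) := by
    show Alt f (2*(i₀+1)+1) x
    have heq : 2*(i₀+1)+1 = (2*i₀+2) + 1 := by ring
    rw [heq]
    have hpar : (2*i₀+2) % 2 = 0 := by omega
    exact alt_succ (by simp [hfx, hpar]) hAlt
  have hle : i₀ + 1 ≤ d := by
    have := alt_le hnext
    omega
  exact Nat.findGreatest_is_greatest (by omega) hle hnext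

lemma next_even {f : Fn n} {x : V n} (hfx : f x = false) {i : ℕ}
    (h : Alt f (2*i+1) x) : Alt f (2*i+2) x := by
  have heq : 2*i+2 = (2*i+1) + 1 := by ring
  rw [heq]
  have hpar : (2*i+1) % 2 = 1 := by omega
  exact alt_succ (by simp [hfx, hpar]) h

lemma mclosure_any {G : Set (Fn n)} (h : ℕ → Fn n) :
    ∀ (l : List ℕ), (∀ i ∈ l, MClosure G (h i)) →
      MClosure G (fun x => l.any (fun i => h i x))
  | [], _ => .const false
  | a :: l, hcl => by
      have ih := mclosure_any h l (fun i hi => hcl i (by simp [hi]))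
      have ha := hcl a (by simp)
      exact .mor ha ih

/-- The upper bound: a circuit with `clog 2 (dec f + 1)` NOT gates computing `f`. -/
theorem markov_upper (f : Fn n) :
    ∃ C : Circuit n, C.Computes f ∧ C.notGates ≤ Nat.clog 2 (dec f + 1) := by
  classical
  set d := dec f with hd
  set kd := Nat.clog 2 (d + 1) with hkd
  have hdk : d + 1 ≤ 2 ^ kd := Nat.le_pow_clog (by norm_num) _
  set N := 2 ^ (kd + 1) with hN
  have hN2 : N = 2 * 2 ^ kd := by rw [hN, pow_succ]; ring
  -- make all mfn's available
  have hcl0 : ∀ w ∈ (List.range N).map (mfn f), MClosure (∅ : Set (Fn n)) w := by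
    intro w hw
    obtain ⟨i, _, rfl⟩ := List.mem_map.mp hw
    exact .mono (mfn_monotone f i)
  obtain ⟨G₀, _, ha0, hm0⟩ := mclosure_avail_list subset_rfl avail_empty _ hcl0
  have hmem0 : ∀ i < N, mfn f i ∈ G₀ :=
    fun i hi => hm0 _ (List.mem_map.mpr ⟨i, List.mem_range.mpr hi, rfl⟩)
  -- invert the even-indexed ones
  set g : ℕ → Fn n := fun i => mfn f (2*i+2) with hg
  have hsort : ∀ i i' (x : V n), i ≤ i' → g i' x ≤ g i x :=
    fun i i' x hii => mfn_anti f (by omega) x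
  have hbound : ∀ i (x : V n), 2 ^ kd - 1 ≤ i → g i x = false := by
    intro i x hi
    apply mfn_false
    have h1 : 2 ^ kd ≥ 1 := Nat.one_le_pow _ _ (by norm_num)
    omega
  have hmemg : ∀ i, i < 2 ^ kd - 1 → g i ∈ G₀ := by
    intro i hi
    apply hmem0
    rw [hN2]
    omega
  obtain ⟨G', hsub', ha', hm'⟩ := inverter kd g G₀ 0 hsort hbound hmemg ha0
  -- assemble f
  set F : Fn n := fun x =>
    (List.range (d+1)).any (fun i => mfn f (2*i+1) x && !(g i x)) with hF
  have hFcl : MClosure G' F := by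
    apply mclosure_any
    intro i hi
    rw [List.mem_range] at hi
    have hmm : mfn f (2*i+1) ∈ G' := by
      apply hsub'
      apply hmem0
      rw [hN2]
      omega
    exact .mand (.mem hmm) (.mem (hm' i))
  have hFf : F = f := by
    funext x
    cases hfx : f x with
    | true =>
      obtain ⟨i, hid, h1, h2⟩ := exists_maximal_odd hfx
      rw [hF]
      simp only
      rw [List.any_eq_true]
      refine ⟨i, List.mem_range.mpr (by omega), ?_⟩
      have e1 : mfn f (2*i+1) x = true := decide_eq_true h1
      have e2 : g i x = false := decide_eq_false h2
      rw [e1, e2]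
      rfl
    | false =>
      rw [hF]
      simp only
      rw [List.any_eq_false]
      intro i _
      cases hm1 : mfn f (2*i+1) x with
      | false => simp
      | true =>
        have := next_even hfx (of_decide_eq_true hm1)
        have e2 : g i x = true := decide_eq_true this
        rw [e2]
        simp
  obtain ⟨G'', hsub'', ha'', hmF⟩ := mclosure_avail hFcl subset_rfl ha'
  rw [hFf] at hmF
  simpa using avail_computes hmF ha''

end Part7
section Part8

variable {n : ℕ}

lemma eval_eq_getD (C : Circuit n) (x : V n) :
    C.eval x = (C.evalList x).getD (C.gates.length - 1) false := by
  rw [Circuit.eval, List.getLastD_eq_getLast?, List.getLast?_eq_getElem?,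
    List.getD_eq_getElem?_getD, evalList_length]

lemma markov_lower : ∀ (k : ℕ) (C : Circuit n), C.notGates ≤ k →
    ∀ X : List (V n), IsChain X → decOn C.eval X + 1 ≤ 2 ^ k := by
  intro k
  induction k with
  | zero =>
    intro C hk X hX
    have h0 : C.gates.filter isNot = [] := by
      rw [← List.length_eq_zero_iff, ← notGates_eq]
      omega
    have hnot : ∀ g ∈ C.gates, isNot g = false := by
      intro g hg
      have := List.filter_eq_nil_iff.mp h0 g hg
      cases hI : isNot g
      · rfl
      · exact absurd hI this
    have hm : Monotone C.eval := by
      have hmono := elist_monotone C.gates hnot (C.gates.length - 1)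
      intro x y hxy
      rw [eval_eq_getD, eval_eq_getD]
      exact hmono hxy
    rw [monotone_not_dec hm hX]
    simp
  | succ k' ih =>
    intro C hk X hX
    rcases Nat.lt_or_ge C.notGates (k' + 1) with hlt | hge
    · exact le_trans (ih C (by omega) X hX)
        (Nat.pow_le_pow_right (by norm_num) (by omega))
    have hkeq : C.notGates = k' + 1 := le_antisymm hk hge
    classical
    have hex : ∃ p, ∃ hp : p < C.gates.length, isNot (C.gates[p]) = true := by
      have hne : C.gates.filter isNot ≠ [] := by
        intro hnil
        rw [notGates_eq, hnil] at hkeq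
        simp at hkeq
      obtain ⟨g, hgmem⟩ := List.exists_mem_of_ne_nil _ hne
      have hmf := List.mem_filter.mp hgmem
      obtain ⟨p, hp, hpe⟩ := List.mem_iff_getElem.mp hmf.1
      exact ⟨p, hp, by rw [hpe]; exact hmf.2⟩
    set p := Nat.find hex with hpdef
    obtain ⟨hplen, hpnot⟩ := Nat.find_spec hex
    have hmin : ∀ q, q < p → ∀ hq : q < C.gates.length, isNot (C.gates[q]) = false := by
      intro q hqp hqlen
      cases hI : isNot (C.gates[q])
      · rfl
      · exact absurd ⟨hqlen, hI⟩ (Nat.find_min hex hqp)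
    obtain ⟨a, ha⟩ : ∃ a, C.gates[p] = GateOp.not a := by
      cases hg : C.gates[p] with
      | not a => exact ⟨a, rfl⟩
      | var i => rw [hg] at hpnot; exact absurd hpnot (by simp [isNot])
      | const b => rw [hg] at hpnot; exact absurd hpnot (by simp [isNot])
      | and i j => rw [hg] at hpnot; exact absurd hpnot (by simp [isNot])
      | or i j => rw [hg] at hpnot; exact absurd hpnot (by simp [isNot])
    have halt : a < p := by
      have hwfp := C.wf p hplen
      rw [show C.gates.get ⟨p, hplen⟩ = C.gates[p] from rfl, ha] at hwfp
      exact hwfp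
    -- surgery circuits
    have hset : ∀ b : Bool, C.gates.set p (.const b) =
        C.gates.take p ++ .const b :: C.gates.drop (p+1) := by
      intro b
      rw [List.set_eq_take_append_cons_drop, if_pos hplen]
    have hdecomp : C.gates = C.gates.take p ++ GateOp.not a :: C.gates.drop (p+1) := by
      conv_lhs => rw [← List.take_append_drop p C.gates,
        ← List.getElem_cons_drop hplen, ha]
    have hwfb : ∀ b : Bool, ∀ (i : ℕ) (h : i < (C.gates.set p (.const b)).length),
        ((C.gates.set p (.const b)).get ⟨i, h⟩).refsLt i := by
      intro b i h
      have hlen : i < C.gates.length := by rw [List.length_set] at h; exact h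
      show ((C.gates.set p (.const b))[i]).refsLt i
      rw [List.getElem_set]
      split
      · trivial
      · exact C.wf i hlen
    set Cb : Bool → Circuit n := fun b =>
      ⟨C.gates.set p (.const b), by
        intro hnil
        apply C.nonempty
        rw [← List.length_eq_zero_iff, ← List.length_set (i := p) (a := GateOp.const b),
          hnil]
        rfl, hwfb b⟩ with hCb
    have hng : ∀ b, (Cb b).notGates + 1 = C.notGates := by
      intro b
      rw [notGates_eq, notGates_eq]
      show (List.filter isNot (C.gates.set p (.const b))).length + 1 = _
      rw [hset b]
      conv_rhs => rw [hdecomp]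
      rw [List.filter_append, List.filter_append]
      have e1 : List.filter isNot (GateOp.const b :: C.gates.drop (p+1))
          = List.filter isNot (C.gates.drop (p+1)) := by
        simp [List.filter_cons, isNot]
      have e2 : List.filter isNot (GateOp.not a :: C.gates.drop (p+1))
          = GateOp.not a :: List.filter isNot (C.gates.drop (p+1)) := by
        simp [List.filter_cons, isNot]
      rw [e1, e2]
      simp only [List.length_append, List.length_cons]
      omega
    -- the monotone input of the first NOT gate
    set u : V n → Bool := fun x => (elist x (C.gates.take p)).getD a false with hu
    have humono : Monotone u := by
      apply elist_monotone
      intro g hg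
      obtain ⟨q, hq, hqe⟩ := List.mem_iff_getElem.mp hg
      have hqp : q < p := by
        have := hq
        rw [List.length_take] at this
        omega
      have hqlen : q < C.gates.length := by
        have := hq
        rw [List.length_take] at this
        omega
      rw [← hqe, List.getElem_take]
      exact hmin q hqp hqlen
    have hpref : ∀ x, (C.evalList x).getD a false = u x := by
      intro x
      show (elist x C.gates).getD a false = _
      conv_lhs => rw [← List.take_append_drop p C.gates]
      exact elist_prefix _ _ (by rw [List.length_take]; omega)
    have hagree : ∀ (b : Bool) (x : V n), (!(u x)) = b → (Cb b).eval x = C.eval x := by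
      intro b x hb
      have hval : (Cb b).evalList x = C.evalList x := by
        show elist x (C.gates.set p (.const b)) = elist x C.gates
        rw [hset b]
        conv_rhs => rw [hdecomp]
        apply elist_middle
        show b = !((elist x (C.gates.take p)).getD a false)
        exact hb.symm
      rw [eval_eq_getD, eval_eq_getD, hval]
      have : (Cb b).gates.length = C.gates.length := List.length_set
      rw [this]
    -- split the chain
    set P := X.takeWhile (fun z => !(u z)) with hPdef
    set S := X.dropWhile (fun z => !(u z)) with hSdef
    have hPS : P ++ S = X := List.takeWhile_append_dropWhile
    have hchainP : IsChain P := hX.sublist (List.takeWhile_sublist _)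
    have hchainS : IsChain S := hX.sublist (List.dropWhile_sublist _)
    have hPval : ∀ z ∈ P, (!(u z)) = true := by
      intro z hz
      rw [hPdef] at hz
      exact List.mem_takeWhile_imp (p := fun z => !u z) (l := X) hz
    have hSval : ∀ z ∈ S, (!(u z)) = false := by
      intro z hz
      rcases hhead : S.head? with _ | h0
      · rw [List.head?_eq_none_iff] at hhead
        rw [hhead] at hz
        simp at hz
      · have hh0 : (!(u h0)) = false := by
          have hlem := List.head?_dropWhile_not (fun z => !(u z)) X
          rw [← hSdef, hhead] at hlem
          exact hlem
        have hle : h0 ≤ z := by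
          rcases hSe : S with _ | ⟨s0, tl⟩
          · rw [hSe] at hz; simp at hz
          · have hs0 : s0 = h0 := by
              rw [hSe] at hhead
              simpa using hhead
            subst hs0
            rw [hSe] at hz
            rcases List.mem_cons.mp hz with rfl | hz'
            · exact le_rfl
            · have hpair := List.isChain_iff_pairwise.mp (hSe ▸ hchainS)
              exact (List.pairwise_cons.mp hpair).1 z hz' |>.le
        have hmono := humono hle
        have hth : u h0 = true := by
          cases hq : u h0
          · rw [hq] at hh0; exact absurd hh0 (by decide)
          · rfl
        rw [hth] at hmono
        have : u z = true := by
          cases hq : u z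
          · rw [hq] at hmono; exact absurd hmono (by decide)
          · rfl
        rw [this]
        rfl
    have hPdec : decOn C.eval P + 1 ≤ 2 ^ k' := by
      have hcongr : decOn C.eval P = decOn (Cb true).eval P :=
        (decOn_congr (fun z hz => hagree true z (hPval z hz))).symm
      rw [hcongr]
      exact ih (Cb true) (by have := hng true; omega) P hchainP
    have hSdec : decOn C.eval S + 1 ≤ 2 ^ k' := by
      have hcongr : decOn C.eval S = decOn (Cb false).eval S :=
        (decOn_congr (fun z hz => hagree false z (hSval z hz))).symm
      rw [hcongr]
      exact ih (Cb false) (by have := hng false; omega) S hchainS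
    have hsplit := decOn_append_le C.eval P S
    rw [hPS] at hsplit
    have hpow : 2 ^ (k' + 1) = 2 ^ k' + 2 ^ k' := by
      rw [pow_succ]; ring
    omega

lemma markov_lower' (C : Circuit n) (f : Fn n) (hC : C.Computes f) :
    dec f + 1 ≤ 2 ^ C.notGates := by
  have h : ∀ X : List (V n), IsChain X → decOn f X + 1 ≤ 2 ^ C.notGates := by
    intro X hX
    rw [decOn_congr (fun z _ => (hC z).symm)]
    exact markov_lower C.notGates C le_rfl X hX
  have hd := dec_le f (K := 2 ^ C.notGates - 1) (fun X hX => by have := h X hX; omega)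
  have hpos : 1 ≤ 2 ^ C.notGates := Nat.one_le_pow _ _ (by norm_num)
  omega

end Part8


/-- Markov's theorem: the inversion complexity of every Boolean function `f`
in circuits equals `⌈log₂ (d(f) + 1)⌉`. -/
theorem markov (n : ℕ) (f : (Fin n → Bool) → Bool) :
    invCircuit f = Nat.clog 2 (dec f + 1) := by
  obtain ⟨C₀, hcomp, hle⟩ := markov_upper f
  apply le_antisymm
  · exact le_trans (Nat.sInf_le ⟨C₀, hcomp, rfl⟩) hle
  · have hne : {k | ∃ C : Circuit n, C.Computes f ∧ C.notGates = k}.Nonempty :=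
      ⟨C₀.notGates, C₀, hcomp, rfl⟩
    obtain ⟨C₁, hcomp1, heq1⟩ := Nat.sInf_mem hne
    have hlow := markov_lower' C₁ f hcomp1
    rw [heq1] at hlow
    exact (Nat.clog_le_iff_le_pow (by norm_num)).mpr hlow

end InversionComplexity
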